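/- arXiv:1705.03771 — 2 statements merged into one kernel-verified Lean document; each statement's English description precedes it below -/
import Mathlib

section
/- In the 5-realization example, with threshold x = 23/25, the stop node of realization φ_2 under the greedy policy is node b = {φ_1, φ_2, φ_3} and the stop node of realization φ_1 is node c = {φ_1, φ_3}; since φ_1 and φ_3 belong to both b and c, the collection of stop nodes does not partition the set of realizations. -/
/-- Expected reward of a node `a` in the 5-realization example: all
realizations have probability 1/5 and distinct classes, so
`f_E(a) = 1 - (|a|/5)^2 + 1/25`. -/
def fE (a : Finset (Fin 5)) : ℚ := 1 - ((a.card : ℚ) / 5) ^ 2 + 1/25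

/-- `a` is the stop node for threshold `x` along the root-to-leaf `path` of a
realization: it lies on the path, has expected reward `< x`, and attains the
maximal expected reward among nodes on the path with reward `< x`. -/
def IsStopNode (path : List (Finset (Fin 5))) (x : ℚ) (a : Finset (Fin 5)) : Prop :=
  a ∈ path ∧ fE a < x ∧ ∀ a' ∈ path, fE a' < x → fE a' ≤ fE a

lemma fE_r : fE Finset.univ = 1/25 := by
  have : (Finset.univ : Finset (Fin 5)).card = 5 := by decide
  simp [fE, this]
lemma fE_b : fE ({0,1,2} : Finset (Fin 5)) = 17/25 := by
  have : ({0,1,2} : Finset (Fin 5)).card = 3 := by decide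
  simp [fE, this]; norm_num
lemma fE_c : fE ({0,2} : Finset (Fin 5)) = 22/25 := by
  have : ({0,2} : Finset (Fin 5)).card = 2 := by decide
  simp [fE, this]; norm_num
lemma fE_d : fE ({1} : Finset (Fin 5)) = 1 := by
  simp [fE]; norm_num
lemma fE_e : fE ({0} : Finset (Fin 5)) = 1 := by
  simp [fE]; norm_num

/-- With threshold `x = 23/25`, the stop node of `φ₂` (whose greedy path is
`r → b → d`) is `b = {φ₁,φ₂,φ₃}`, and the stop node of `φ₁` (path
`r → b → c → {φ₁}`) is `c = {φ₁,φ₃}`; since `b ∩ c ≠ ∅` and `b ≠ c`, the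
collection of stop nodes is not pairwise disjoint, hence it does not
partition the realizations. -/
theorem stmt3 :
    let r : Finset (Fin 5) := Finset.univ
    let b : Finset (Fin 5) := {0, 1, 2}
    let c : Finset (Fin 5) := {0, 2}
    let d : Finset (Fin 5) := {1}
    let e : Finset (Fin 5) := {0}
    IsStopNode [r, b, d] (23/25) b ∧
    IsStopNode [r, b, c, e] (23/25) c ∧
    (b ∩ c).Nonempty ∧ b ≠ c ∧
    ¬ ({b, c} : Set (Finset (Fin 5))).Pairwise (Disjoint · ·) := by
  intro r b c d e
  refine ⟨⟨by simp, by rw [show b = _ from rfl, fE_b]; norm_num, ?_⟩,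
    ⟨by simp, by rw [show c = _ from rfl, fE_c]; norm_num, ?_⟩,
    ⟨0, by decide⟩, by decide, ?_⟩
  · intro a' ha' h
    fin_cases ha' <;> revert h <;> norm_num [r, b, d, fE_r, fE_b, fE_d]
  · intro a' ha' h
    fin_cases ha' <;> revert h <;> norm_num [r, b, c, e, fE_r, fE_b, fE_c, fE_e]
  · intro h
    have hd := h (Set.mem_insert _ _) (Set.mem_insert_of_mem _ rfl) (by decide)
    exact absurd (Finset.disjoint_left.mp hd (show (0:Fin 5) ∈ b by decide)) (by decide)
end

section
/- The function f(Q_A, φ_i) = 1 - p_a^2 + (p_a^{k_i})^2, where p_a is the total probability of realizations consistent with the observations Q_A and p_a^{k_i} is the probability mass of those of class k_i, satisfies strong adaptive monotonicity: if node b is obtained from node a by observing the outcome of one additional item, then f_E(b) ≥ f_E(a), where f_E(a) = Σ_{φ∈a} (p(φ)/p_a) f(Q_A, φ). -/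
open Finset

lemma key_ineq {K : Type*} (I : Finset K) (q r : K → ℝ)
    (hr : ∀ k ∈ I, 0 ≤ r k) (hqr : ∀ k ∈ I, r k ≤ q k)
    (P Q : ℝ) (hP : ∑ k ∈ I, q k = P) (hQ : ∑ k ∈ I, r k = Q)
    (hP0 : 0 < P) (hQ0 : 0 < Q) :
    1 - P ^ 2 + (∑ k ∈ I, (q k) ^ 3) / P ≤ 1 - Q ^ 2 + (∑ k ∈ I, (r k) ^ 3) / Q := by
  have hrQ : ∀ k ∈ I, r k ≤ Q := fun k hk => hQ ▸ Finset.single_le_sum hr hk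
  have hs0 : ∀ k ∈ I, 0 ≤ q k - r k := fun k hk => sub_nonneg.2 (hqr k hk)
  have hsS : ∀ k ∈ I, q k - r k ≤ P - Q := by
    intro k hk
    have := Finset.single_le_sum hs0 hk
    rwa [Finset.sum_sub_distrib, hP, hQ] at this
  have hQP : Q ≤ P := by
    have := Finset.sum_le_sum hqr
    rw [hP, hQ] at this; exact this
  have hmain : Q * (∑ k ∈ I, (q k) ^ 3) - P * (∑ k ∈ I, (r k) ^ 3)
      ≤ (P ^ 2 - Q ^ 2) * (P * Q) := by
    have step : ∀ k ∈ I, Q * (q k) ^ 3 - P * (r k) ^ 3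
        ≤ Q ^ 3 * (q k - r k) + (P - Q) * Q ^ 2 * r k
          + 3 * Q ^ 2 * (P - Q) * (q k - r k) + Q * (P - Q) ^ 2 * (q k - r k) := by
      intro k hk
      have h1 := hr k hk
      have h2 := hs0 k hk
      have h3 := hrQ k hk
      have h4 := hsS k hk
      nlinarith [mul_nonneg (mul_nonneg h2 (sq_nonneg (Q - r k))) (by linarith : (0:ℝ) ≤ Q + 2 * r k),
        mul_nonneg (mul_nonneg (by norm_num : (0:ℝ) ≤ 2) (pow_nonneg h1 3)) (by linarith : (0:ℝ) ≤ (P - Q) - (q k - r k)),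
        mul_nonneg (mul_nonneg (mul_nonneg (by linarith : (0:ℝ) ≤ P - Q) h1) (by linarith : (0:ℝ) ≤ Q - r k)) (by linarith : (0:ℝ) ≤ Q + r k),
        mul_nonneg (mul_nonneg (mul_nonneg (by norm_num : (0:ℝ) ≤ 3) hQ0.le) h2) (by nlinarith : (0:ℝ) ≤ Q * (P - Q) - r k * (q k - r k)),
        mul_nonneg (mul_nonneg (mul_nonneg hQ0.le h2) (by linarith : (0:ℝ) ≤ (P - Q) - (q k - r k))) (by linarith : (0:ℝ) ≤ (P - Q) + (q k - r k))]
    calc Q * (∑ k ∈ I, (q k) ^ 3) - P * (∑ k ∈ I, (r k) ^ 3)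
        = ∑ k ∈ I, (Q * (q k) ^ 3 - P * (r k) ^ 3) := by
          rw [Finset.sum_sub_distrib, Finset.mul_sum, Finset.mul_sum]
      _ ≤ ∑ k ∈ I, (Q ^ 3 * (q k - r k) + (P - Q) * Q ^ 2 * r k
          + 3 * Q ^ 2 * (P - Q) * (q k - r k) + Q * (P - Q) ^ 2 * (q k - r k)) :=
          Finset.sum_le_sum step
      _ = Q ^ 3 * (P - Q) + (P - Q) * Q ^ 2 * Q + 3 * Q ^ 2 * (P - Q) * (P - Q)
          + Q * (P - Q) ^ 2 * (P - Q) := by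
          simp only [Finset.sum_add_distrib, ← Finset.mul_sum, Finset.sum_sub_distrib, hP, hQ]
      _ = (P ^ 2 - Q ^ 2) * (P * Q) := by ring
  have h1 : (∑ k ∈ I, (q k) ^ 3) / P - (∑ k ∈ I, (r k) ^ 3) / Q ≤ P ^ 2 - Q ^ 2 := by
    rw [div_sub_div _ _ hP0.ne' hQ0.ne', div_le_iff₀ (mul_pos hP0 hQ0)]
    nlinarith [hmain]
  linarith

/-- Strong adaptive monotonicity of `f(Q_A, φ) = 1 - p_a² + (p_a^{k})²`:
if node `b` is obtained from node `a` by observing the outcome `o` of one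
additional item `obs`, then the expected reward does not decrease,
`f_E(b) ≥ f_E(a)`, where
`f_E(a) = Σ_{φ ∈ a} (p(φ)/p_a) · (1 - p_a² + (p_a^{class(φ)})²)`. -/
theorem stmt5 {Ω K O : Type*} [Fintype Ω] [DecidableEq K] [DecidableEq O]
    (p : Ω → ℝ) (hp : ∀ φ, 0 ≤ p φ) (hsum : ∑ φ : Ω, p φ = 1)
    (cls : Ω → K) (obs : Ω → O) (o : O)
    (a : Finset Ω)
    (b : Finset Ω) (hb : b = a.filter (fun φ => obs φ = o))
    (pA : Finset Ω → ℝ) (hpA : ∀ s, pA s = ∑ φ ∈ s, p φ)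
    (mass : Finset Ω → K → ℝ)
    (hmass : ∀ s k, mass s k = ∑ φ ∈ s.filter (fun φ => cls φ = k), p φ)
    (fe : Finset Ω → ℝ)
    (hfe : ∀ s, fe s = ∑ φ ∈ s, (p φ / pA s) * (1 - (pA s) ^ 2 + (mass s (cls φ)) ^ 2))
    (hpa : 0 < pA a) (hpb : 0 < pA b) :
    fe a ≤ fe b := by
  have hsub : b ⊆ a := hb ▸ Finset.filter_subset _ _
  set I := a.image cls with hI
  have formula : ∀ s : Finset Ω, (∀ x ∈ s, cls x ∈ I) → 0 < pA s →
      fe s = 1 - (pA s) ^ 2 + (∑ k ∈ I, (mass s k) ^ 3) / pA s := by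
    intro s hmaps hs0
    have h2 : ∑ φ ∈ s, p φ * (mass s (cls φ)) ^ 2 = ∑ k ∈ I, (mass s k) ^ 3 := by
      rw [← Finset.sum_fiberwise_of_maps_to hmaps (fun φ => p φ * (mass s (cls φ)) ^ 2)]
      refine Finset.sum_congr rfl fun k hk => ?_
      have e : ∀ φ ∈ s.filter (fun φ => cls φ = k),
          p φ * (mass s (cls φ)) ^ 2 = p φ * (mass s k) ^ 2 := by
        intro φ hφ
        rw [(Finset.mem_filter.1 hφ).2]
      rw [Finset.sum_congr rfl e, ← Finset.sum_mul, ← hmass s k]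
      ring
    rw [hfe s]
    have e2 : ∀ φ ∈ s, (p φ / pA s) * (1 - (pA s) ^ 2 + (mass s (cls φ)) ^ 2)
        = (p φ * (1 - (pA s) ^ 2) + p φ * (mass s (cls φ)) ^ 2) / pA s := by
      intro φ _; ring
    rw [Finset.sum_congr rfl e2, ← Finset.sum_div, Finset.sum_add_distrib, ← Finset.sum_mul,
      ← hpA s, h2]
    field_simp
  have hmapsa : ∀ x ∈ a, cls x ∈ I := fun x hx => Finset.mem_image_of_mem cls hx
  have hmapsb : ∀ x ∈ b, cls x ∈ I := fun x hx => Finset.mem_image_of_mem cls (hsub hx)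
  have hPsum : ∑ k ∈ I, mass a k = pA a := by
    rw [hpA]
    simp only [hmass]
    exact Finset.sum_fiberwise_of_maps_to hmapsa p
  have hQsum : ∑ k ∈ I, mass b k = pA b := by
    rw [hpA]
    simp only [hmass]
    exact Finset.sum_fiberwise_of_maps_to hmapsb p
  have hr : ∀ k ∈ I, 0 ≤ mass b k := by
    intro k _
    rw [hmass]
    exact Finset.sum_nonneg fun φ _ => hp φ
  have hqr : ∀ k ∈ I, mass b k ≤ mass a k := by
    intro k _
    rw [hmass, hmass]
    exact Finset.sum_le_sum_of_subset_of_nonneg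
      (Finset.filter_subset_filter _ hsub) (fun φ _ _ => hp φ)
  rw [formula a hmapsa hpa, formula b hmapsb hpb]
  exact key_ineq I (fun k => mass a k) (fun k => mass b k) hr hqr (pA a) (pA b)
    hPsum hQsum hpa hpb
end
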